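/- If G is a countable topological group and H is a topological group in which all closed subgroups are separable, then every closed subgroup of G × H is separable. -/

import Mathlib

/-- If `G` is a countable topological group and all closed subgroups of `H` are separable,
then every closed subgroup of `G × H` is separable. -/
theorem closed_subgroups_of_product_with_countable_factor
    (G H : Type*) [Group G] [TopologicalSpace G] [IsTopologicalGroup G] [T2Space G]
    [Countable G]
    [Group H] [TopologicalSpace H] [IsTopologicalGroup H] [T2Space H]
    (hH : ∀ N : Subgroup H, IsClosed (N : Set H) → TopologicalSpace.SeparableSpace N)
    (C : Subgroup (G × H)) (hC : IsClosed (C : Set (G × H))) :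
    TopologicalSpace.SeparableSpace C := by
  classical
  -- the subgroup of `H` corresponding to the fiber of `C` over `1 : G`
  set ι : H →* G × H := (1 : H →* G).prod (MonoidHom.id H) with hι
  have hιcont : Continuous (ι : H → G × H) := by
    have : (ι : H → G × H) = fun h => ((1 : G), h) := rfl
    rw [this]; fun_prop
  set N : Subgroup H := C.comap ι with hN
  have hNmem : ∀ h : H, h ∈ N ↔ ((1 : G), h) ∈ C := fun h => Iff.rfl
  have hNclosed : IsClosed (N : Set H) := hC.preimage hιcont
  have : TopologicalSpace.SeparableSpace N := hH N hNclosed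
  -- a countable set `D ⊆ N` with `N ⊆ closure D`
  obtain ⟨D0, hD0c, hD0d⟩ := TopologicalSpace.exists_countable_dense (N : Set H)
  set D : Set H := Subtype.val '' D0 with hDdef
  have hDc : D.Countable := hD0c.image _
  have hDN : D ⊆ (N : Set H) := by rintro x ⟨y, -, rfl⟩; exact y.2
  have hND : (N : Set H) ⊆ closure D := by
    intro x hx
    have : (⟨x, hx⟩ : (N : Set H)) ∈ closure D0 := hD0d.closure_eq ▸ Set.mem_univ _
    exact closure_subtype.mp this
  -- choose one point of `C` above each `g : G` in the image of `C`
  set K : Set G := {g : G | ∃ h : H, (g, h) ∈ C} with hK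
  have hc : ∀ g ∈ K, ∃ p : G × H, p ∈ C ∧ p.1 = g := by
    rintro g ⟨h, hh⟩; exact ⟨(g, h), hh, rfl⟩
  choose! c hcC hc1 using hc
  -- the candidate countable dense subset
  set T : Set (G × H) := ⋃ g ∈ K, (fun d => c g * ((1 : G), d)) '' D with hT
  have hTc : T.Countable :=
    (Set.to_countable K).biUnion fun g _ => hDc.image _
  have hTC : T ⊆ (C : Set (G × H)) := by
    intro p hp
    simp only [hT, Set.mem_iUnion, Set.mem_image] at hp
    obtain ⟨g, hg, d, hd, rfl⟩ := hp
    exact C.mul_mem (hcC g hg) ((hNmem d).mp (hDN hd))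
  have hCT : (C : Set (G × H)) ⊆ closure T := by
    intro p hp
    have hK1 : p.1 ∈ K := ⟨p.2, hp⟩
    set q : G × H := c p.1 with hq
    have hqC : q ∈ C := hcC p.1 hK1
    have hq1 : q.1 = p.1 := hc1 p.1 hK1
    have hmem : q⁻¹ * p ∈ C := C.mul_mem (C.inv_mem hqC) hp
    have hfst : (q⁻¹ * p).1 = 1 := by
      simp [Prod.fst_mul, hq1]
    have heq : ((1 : G), (q⁻¹ * p).2) = q⁻¹ * p := by
      ext <;> simp [hfst]
    have hNh : (q⁻¹ * p).2 ∈ N := by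
      rw [hNmem, heq]; exact hmem
    have hcl : (q⁻¹ * p).2 ∈ closure D := hND hNh
    set φ : H → G × H := fun d => q * ((1 : G), d) with hφ
    have hφcont : Continuous φ := by fun_prop
    have hpφ : p = φ (q⁻¹ * p).2 := by
      show p = q * ((1 : G), (q⁻¹ * p).2)
      rw [heq, mul_inv_cancel_left]
    have : p ∈ φ '' closure D := ⟨_, hcl, hpφ.symm⟩
    have hsub : φ '' closure D ⊆ closure (φ '' D) :=
      image_closure_subset_closure_image hφcont
    refine closure_mono ?_ (hsub this)
    intro x hx
    simp only [hT, Set.mem_iUnion]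
    exact ⟨p.1, hK1, hx⟩
  -- conclude
  refine ⟨⟨Subtype.val ⁻¹' T, hTc.preimage Subtype.val_injective, ?_⟩⟩
  rw [dense_iff_closure_eq, Set.eq_univ_iff_forall]
  intro x
  rw [closure_subtype, Set.image_preimage_eq_inter_range, Subtype.range_coe_subtype]
  have hTeq : T ∩ {x : G × H | x ∈ C} = T := Set.inter_eq_left.mpr hTC
  rw [hTeq]
  exact hCT x.2
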